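/- The number of subgroups of index d in ℤ × ℤ equals σ(d) = ∑_{k | d} k, the sum of the divisors of d. -/

import Mathlib

open AddSubgroup

/-- The sublattice of `ℤ × ℤ` with Hermite normal form basis `(a,0)`, `(b,c)`. -/
def myLat (a : ℕ) (b : ℤ) (c : ℕ) : AddSubgroup (ℤ × ℤ) where
  carrier := {p | (c : ℤ) ∣ p.2 ∧ (a * c : ℤ) ∣ p.1 * c - b * p.2}
  zero_mem' := by simp
  add_mem' := by
    rintro p q ⟨h1, h2⟩ ⟨h3, h4⟩
    refine ⟨dvd_add h1 h3, ?_⟩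
    have := dvd_add h2 h4
    convert this using 1
    · rfl
    simp [Prod.fst_add, Prod.snd_add]; ring
  neg_mem' := by
    rintro p ⟨h1, h2⟩
    refine ⟨h1.neg_right, ?_⟩
    have := h2.neg_right
    convert this using 1
    · rfl
    simp; ring

lemma mem_Lat {a : ℕ} {b : ℤ} {c : ℕ} {p : ℤ × ℤ} :
    p ∈ myLat a b c ↔ (c : ℤ) ∣ p.2 ∧ (a * c : ℤ) ∣ p.1 * c - b * p.2 := Iff.rfl

lemma Lat_index (a c : ℕ) (ha : 0 < a) (hc : 0 < c) (b : ℤ) :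
    (myLat a b c).index = a * c := by
  classical
  set K : AddSubgroup (ℤ × ℤ) :=
    AddSubgroup.comap (AddMonoidHom.snd ℤ ℤ) (zmultiples (c : ℤ)) with hK
  have hLK : myLat a b c ≤ K := by
    rintro p ⟨h1, h2⟩
    simpa [hK, AddSubgroup.mem_comap, mem_zmultiples_iff] using
      (Int.mem_zmultiples_iff.mpr h1)
  have hKind : K.index = c := by
    rw [hK, AddSubgroup.index_comap_of_surjective _ (fun y => ⟨(0, y), rfl⟩),
      Int.index_zmultiples, Int.natAbs_natCast]
  -- the equiv ℤ × ℤ ≃ K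
  have hcne : (c : ℤ) ≠ 0 := by exact_mod_cast hc.ne'
  let e : ℤ × ℤ →+ K :=
  { toFun := fun p => ⟨(p.1, c * p.2), by
      simp [hK, AddSubgroup.mem_comap, Int.mem_zmultiples_iff]⟩
    map_zero' := by ext <;> simp
    map_add' := by intro p q; ext <;> simp [mul_add] }
  have he : Function.Surjective e := by
    rintro ⟨⟨x, y⟩, hy⟩
    simp only [hK, AddSubgroup.mem_comap, ] at hy
    rw [Int.mem_zmultiples_iff] at hy
    obtain ⟨t, rfl⟩ := hy
    exact ⟨(x, t), by ext <;> simp [e]⟩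
  have hrel : (myLat a b c).relIndex K = a := by
    have h1 : (myLat a b c).relIndex K = ((myLat a b c).addSubgroupOf K).index := rfl
    rw [h1, ← AddSubgroup.index_comap_of_surjective _ he]
    -- comap e (addSubgroupOf) = comap of the composite
    have h2 : ((myLat a b c).addSubgroupOf K).comap e
        = (myLat a b c).comap (K.subtype.comp e) := rfl
    rw [h2]
    -- identify with kernel of ψ
    let ψ : ℤ × ℤ →+ ZMod a :=
    { toFun := fun p => ((p.1 - b * p.2 : ℤ) : ZMod a)
      map_zero' := by simp
      map_add' := by
        intro p q
        simp only [Prod.fst_add, Prod.snd_add]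
        push_cast; ring }
    have hker : (myLat a b c).comap (K.subtype.comp e) = ψ.ker := by
      ext p
      have hep : (K.subtype.comp e) p = (p.1, (c : ℤ) * p.2) := rfl
      rw [AddSubgroup.mem_comap, hep, AddMonoidHom.mem_ker]
      show ((c:ℤ) ∣ (c:ℤ) * p.2 ∧ (a * c : ℤ) ∣ p.1 * c - b * ((c:ℤ) * p.2))
        ↔ ((p.1 - b * p.2 : ℤ) : ZMod a) = 0
      rw [ZMod.intCast_zmod_eq_zero_iff_dvd]
      constructor
      · rintro ⟨-, h⟩
        have : (a : ℤ) * c ∣ (p.1 - b * p.2) * c := by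
          convert h using 1; push_cast; ring
        exact (mul_dvd_mul_iff_right hcne).mp this
      · intro h
        refine ⟨Dvd.intro _ rfl, ?_⟩
        have : (a : ℤ) * c ∣ (p.1 - b * p.2) * c := mul_dvd_mul_right h c
        convert this using 1; push_cast; ring
    rw [hker, AddSubgroup.index_ker]
    have hsurj : Function.Surjective ψ := by
      intro z
      obtain ⟨x, rfl⟩ := ZMod.intCast_surjective z
      exact ⟨(x, 0), by simp [ψ]⟩
    rw [AddMonoidHom.range_eq_top_of_surjective _ hsurj]
    have : Nat.card ((⊤ : AddSubgroup (ZMod a))) = Nat.card (ZMod a) :=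
      Nat.card_congr (AddSubgroup.topEquiv : (⊤ : AddSubgroup (ZMod a)) ≃+ ZMod a).toEquiv
    rw [this]
    exact Nat.card_zmod a
  rw [← AddSubgroup.relIndex_mul_index hLK, hrel, hKind]

/-- Every subgroup of `ℤ` is `zmultiples n` with `n` its index. -/
lemma int_subgroup_eq (C : AddSubgroup ℤ) : ∃ n : ℕ, C = zmultiples (n : ℤ) ∧ C.index = n := by
  obtain ⟨g, hg⟩ := Int.subgroup_cyclic C
  refine ⟨g.natAbs, ?_, ?_⟩
  · rw [hg, ← AddSubgroup.zmultiples_eq_closure, ← Int.zmultiples_natAbs]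
  · rw [hg, ← AddSubgroup.zmultiples_eq_closure, Int.index_zmultiples]

lemma myLat_inj {a a' c c' : ℕ} {b b' : ℤ} (ha : 0 < a) (ha' : 0 < a') (hc : 0 < c)
    (hc' : 0 < c') (hb0 : 0 ≤ b) (hb : b < a) (hb0' : 0 ≤ b') (hb' : b' < a')
    (h : myLat a b c = myLat a' b' c') : a = a' ∧ b = b' ∧ c = c' := by
  have hmem : ∀ (a : ℕ) (b : ℤ) (c : ℕ), ((b, (c : ℤ)) : ℤ × ℤ) ∈ myLat a b c := by
    intro a b c
    exact ⟨dvd_refl _, by simp [mem_Lat]⟩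
  have h1 : ((b', (c' : ℤ)) : ℤ × ℤ) ∈ myLat a b c := h ▸ hmem a' b' c'
  have h2 : ((b, (c : ℤ)) : ℤ × ℤ) ∈ myLat a' b' c' := h.symm ▸ hmem a b c
  have hcc' : c = c' := by
    have d1 : (c : ℤ) ∣ c' := h1.1
    have d2 : (c' : ℤ) ∣ c := h2.1
    exact_mod_cast Int.dvd_antisymm (by positivity) (by positivity) d1 d2
  subst hcc'
  -- equal indexes force a = a'
  have hind : (myLat a b c).index = (myLat a' b' c).index := by rw [h]
  rw [Lat_index a c ha hc b, Lat_index a' c ha' hc b'] at hind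
  have haa' : a = a' := Nat.eq_of_mul_eq_mul_right hc hind
  subst haa'
  refine ⟨rfl, ?_, rfl⟩
  have hdvd : (a : ℤ) * c ∣ b' * c - b * c := h1.2
  have : (a : ℤ) ∣ b' - b := by
    have : (a : ℤ) * c ∣ (b' - b) * c := by convert hdvd using 1; ring
    exact (mul_dvd_mul_iff_right (by exact_mod_cast hc.ne' : (c : ℤ) ≠ 0)).mp this
  have := Int.eq_zero_of_abs_lt_dvd this (abs_lt.mpr ⟨by omega, by omega⟩)
  omega

lemma myLat_surj (d : ℕ) (hd : 0 < d) (H : AddSubgroup (ℤ × ℤ)) (hH : H.index = d) :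
    ∃ (a c : ℕ) (b : ℤ), 0 < a ∧ 0 < c ∧ 0 ≤ b ∧ b < a ∧ a * c = d ∧ H = myLat a b c := by
  -- image of H under the second projection
  obtain ⟨c, hC, hCind⟩ := int_subgroup_eq (H.map (AddMonoidHom.snd ℤ ℤ))
  have hsndsurj : Function.Surjective (AddMonoidHom.snd ℤ ℤ) := fun y => ⟨(0, y), rfl⟩
  have hcd : c ∣ d := by
    rw [← hCind, ← hH]
    exact AddSubgroup.index_map_dvd (H := H) hsndsurj
  have hc : 0 < c := Nat.pos_of_ne_zero (by rintro rfl; exact absurd (Nat.eq_zero_of_zero_dvd hcd) hd.ne')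
  -- the subgroup {x | (x, 0) ∈ H}
  obtain ⟨a, hA, hAind⟩ := int_subgroup_eq (H.comap (AddMonoidHom.inl ℤ ℤ))
  have had : a ∣ d := by
    rw [← hAind, ← hH, AddSubgroup.index_comap]
    exact AddSubgroup.relIndex_dvd_index_of_normal H _
  have ha : 0 < a := Nat.pos_of_ne_zero (by rintro rfl; exact absurd (Nat.eq_zero_of_zero_dvd had) hd.ne')
  have haz : (0 : ℤ) < a := by exact_mod_cast ha
  have hcz : (0 : ℤ) < c := by exact_mod_cast hc
  -- basic membership facts
  have ha0 : ((a : ℤ), (0 : ℤ)) ∈ H := by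
    have : (a : ℤ) ∈ H.comap (AddMonoidHom.inl ℤ ℤ) := by
      rw [hA]; exact AddSubgroup.mem_zmultiples _
    simpa using this
  have hmemA : ∀ x : ℤ, ((x, (0:ℤ)) : ℤ × ℤ) ∈ H ↔ (a : ℤ) ∣ x := by
    intro x
    constructor
    · intro hx
      have : x ∈ H.comap (AddMonoidHom.inl ℤ ℤ) := by simpa using hx
      rw [hA] at this
      exact Int.mem_zmultiples_iff.mp this
    · rintro ⟨t, rfl⟩
      have : ((a : ℤ) * t, (0:ℤ)) = t • ((a : ℤ), (0:ℤ)) := by simp [smul_eq_mul, mul_comm]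
      rw [this]
      exact zsmul_mem ha0 t
  have hmemC : ∀ p : ℤ × ℤ, p ∈ H → (c : ℤ) ∣ p.2 := by
    intro p hp
    have : p.2 ∈ H.map (AddMonoidHom.snd ℤ ℤ) := ⟨p, hp, rfl⟩
    rw [hC] at this
    exact Int.mem_zmultiples_iff.mp this
  -- find b₀ with (b₀, c) ∈ H
  have hcC : (c : ℤ) ∈ H.map (AddMonoidHom.snd ℤ ℤ) := by
    rw [hC]; exact AddSubgroup.mem_zmultiples _
  obtain ⟨p₀, hp₀, hp₀c⟩ := hcC
  obtain ⟨b₀, y₀⟩ := p₀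
  have hy₀ : y₀ = (c : ℤ) := hp₀c
  subst hy₀
  set b : ℤ := b₀ % a with hb
  have hb0 : 0 ≤ b := Int.emod_nonneg _ haz.ne'
  have hba : b < a := Int.emod_lt_of_pos _ haz
  have hbc : ((b, (c : ℤ)) : ℤ × ℤ) ∈ H := by
    have : ((b, (c : ℤ)) : ℤ × ℤ) = (b₀, (c : ℤ)) - (b₀ / a) • ((a : ℤ), (0:ℤ)) := by
      ext
      · simp [hb, Int.emod_def, smul_eq_mul]; ring
      · simp
    rw [this]
    exact sub_mem hp₀ (zsmul_mem ha0 _)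
  have hHL : H = myLat a b c := by
    ext ⟨x, y⟩
    constructor
    · intro hxy
      have hcy : (c : ℤ) ∣ y := hmemC _ hxy
      obtain ⟨t, rfl⟩ := hcy
      have h1 : ((x - t * b, (0:ℤ)) : ℤ × ℤ) ∈ H := by
        have : ((x - t * b, (0:ℤ)) : ℤ × ℤ) = (x, (c : ℤ) * t) - t • ((b, (c : ℤ)) : ℤ × ℤ) := by
          ext <;> simp [smul_eq_mul] <;> ring
        rw [this]
        exact sub_mem hxy (zsmul_mem hbc t)
      have h2 : (a : ℤ) ∣ x - t * b := (hmemA _).mp h1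
      refine ⟨Dvd.intro _ rfl, ?_⟩
      have : (a : ℤ) * c ∣ (x - t * b) * c := mul_dvd_mul_right h2 c
      convert this using 1; ring
    · rintro ⟨hcy, hac⟩
      obtain ⟨t, ht⟩ := hcy
      have h2 : (a : ℤ) ∣ x - b * t := by
        have : (a : ℤ) * c ∣ (x - b * t) * c := by
          convert hac using 1; rw [ht]; ring
        exact (mul_dvd_mul_iff_right hcz.ne').mp this
      have h1 : ((x - b * t, (0:ℤ)) : ℤ × ℤ) ∈ H := (hmemA _).mpr h2
      have : ((x, y) : ℤ × ℤ) = (x - b * t, (0:ℤ)) + t • ((b, (c : ℤ)) : ℤ × ℤ) := by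
        ext
        · simp [smul_eq_mul]; ring
        · simp only [Prod.snd_add, Prod.smul_snd, smul_eq_mul]
          have ht' : y = (c : ℤ) * t := ht
          show y = 0 + t * c
          rw [ht']; ring
      rw [this]
      exact add_mem h1 (zsmul_mem hbc t)
  have hacd : a * c = d := by
    rw [← hH, hHL, Lat_index a c ha hc b]
  exact ⟨a, c, b, ha, hc, hb0, hba, hacd, hHL⟩

/-- The number of subgroups of index `d` in `ℤ × ℤ` is `σ(d) = ∑_{k ∣ d} k`. -/
theorem card_index_d_sublattices (d : ℕ) (hd : 0 < d) :
    Nat.card {H : AddSubgroup (ℤ × ℤ) // H.index = d} = ∑ k ∈ d.divisors, k := by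
  classical
  let F : (Σ k : d.divisors, Fin k) → {H : AddSubgroup (ℤ × ℤ) // H.index = d} :=
    fun t => ⟨myLat (t.1 : ℕ) ((t.2 : ℕ) : ℤ) (d / (t.1 : ℕ)), by
      have hk := (Nat.mem_divisors.mp t.1.2).1
      have hkpos : 0 < (t.1 : ℕ) := Nat.pos_of_mem_divisors t.1.2
      have hc : 0 < d / (t.1 : ℕ) := Nat.div_pos (Nat.le_of_dvd hd hk) hkpos
      rw [Lat_index _ _ hkpos hc, Nat.mul_div_cancel' hk]⟩
  have hbij : Function.Bijective F := by
    constructor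
    · rintro ⟨⟨a, ha⟩, b⟩ ⟨⟨a', ha'⟩, b'⟩ h
      have heq : myLat a ((b : ℕ) : ℤ) (d / a) = myLat a' ((b' : ℕ) : ℤ) (d / a') :=
        congrArg Subtype.val h
      have hapos : 0 < a := Nat.pos_of_mem_divisors ha
      have hapos' : 0 < a' := Nat.pos_of_mem_divisors ha'
      have hcpos : 0 < d / a :=
        Nat.div_pos (Nat.le_of_dvd hd (Nat.mem_divisors.mp ha).1) hapos
      have hcpos' : 0 < d / a' :=
        Nat.div_pos (Nat.le_of_dvd hd (Nat.mem_divisors.mp ha').1) hapos'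
      obtain ⟨h1, h2, -⟩ := myLat_inj hapos hapos' hcpos hcpos'
        (by positivity) (by exact_mod_cast b.2) (by positivity) (by exact_mod_cast b'.2) heq
      subst h1
      have hbb : b = b' := Fin.ext (by exact_mod_cast h2)
      subst hbb
      rfl
    · rintro ⟨H, hH⟩
      obtain ⟨a, c, b, ha, hc, hb0, hba, hacd, hHL⟩ := myLat_surj d hd H hH
      have had : a ∣ d := ⟨c, hacd.symm⟩
      have hmem : a ∈ d.divisors := Nat.mem_divisors.mpr ⟨had, hd.ne'⟩
      have hcda : d / a = c := by rw [← hacd, Nat.mul_div_cancel_left _ ha]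
      have hbtn : b.toNat < a := by omega
      refine ⟨⟨⟨a, hmem⟩, ⟨b.toNat, hbtn⟩⟩, ?_⟩
      apply Subtype.ext
      show myLat a ((b.toNat : ℕ) : ℤ) (d / a) = H
      rw [hHL, hcda, Int.toNat_of_nonneg hb0]
  have hcard := Nat.card_congr (Equiv.ofBijective F hbij)
  rw [← hcard, Nat.card_eq_fintype_card, Fintype.card_sigma]
  simp only [Fintype.card_fin]
  exact Finset.sum_coe_sort d.divisors (fun k => k)
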